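/- Let X be a compactum. Then sX ∘ μX = κX ∘ s_{DX} ∘ I(sX) as maps I(IX) → DX; explicitly, for every idempotent measure N on the compactum IX and every x ∈ X, inf{N(π_φ) : φ ∈ C(X,(-∞,0]) with φ(x) = 0} = max{f(x) + s_{DX}(I(sX)(N))(f) : f ∈ DX}. -/

import Mathlib

/-- An idempotent (Maslov) probability measure on `X`:
a functional on `C(X, ℝ)` preserving constants, translation by constants,
and finite maxima. -/
def IsIdempotentMeasure {X : Type*} [TopologicalSpace X] (μ : C(X, ℝ) → ℝ) : Prop :=
  μ 1 = 1 ∧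
  (∀ (l : ℝ) (φ : C(X, ℝ)), μ (ContinuousMap.const X l + φ) = l + μ φ) ∧
  (∀ ψ φ : C(X, ℝ), μ (ψ ⊔ φ) = max (μ ψ) (μ φ))
/-- Membership in `DX`: an upper semicontinuous function `X → [-∞, 0]`
attaining the maximal value `0`. -/
def MemD {X : Type*} [TopologicalSpace X] (f : X → EReal) : Prop :=
  UpperSemicontinuous f ∧ (∀ x, f x ≤ 0) ∧ ∃ x, f x = 0
/-- The space `DX` of densities. -/
structure Dspace (X : Type*) [TopologicalSpace X] where
  toFun : X → EReal
  memD : MemD toFun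

/-- The topology on `DX` generated by the subbase of sets
`S₋(A,t) = {f : f(a) < t for all a ∈ A}` (`A` closed, `t ∈ [-∞,0]`) and
`S₊(U,t) = {f : f(a) > t for some a ∈ U}` (`U` open, `t ∈ [-∞,0]`). -/
instance (X : Type*) [TopologicalSpace X] : TopologicalSpace (Dspace X) :=
  TopologicalSpace.generateFrom
    ({S | ∃ (A : Set X) (t : EReal), IsClosed A ∧ t ≤ 0 ∧
        S = {f : Dspace X | ∀ a ∈ A, f.toFun a < t}} ∪
     {S | ∃ (U : Set X) (t : EReal), IsOpen U ∧ t ≤ 0 ∧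
        S = {f : Dspace X | ∃ a ∈ U, t < f.toFun a}})
/-- The space `IX` of idempotent measures, topologized as a subspace of `ℝ^{C(X)}`. -/
abbrev IspX (X : Type*) [TopologicalSpace X] := {μ : C(X, ℝ) → ℝ // IsIdempotentMeasure μ}
/-- The density `sX(μ)` of a functional `μ`:
`sX(μ)(x) = inf { μ(φ) : φ ∈ C(X,(-∞,0]), φ(x) = 0 }`, computed in `ℝ ∪ {-∞}`. -/
noncomputable def sFun {X : Type*} [TopologicalSpace X] (μ : C(X, ℝ) → ℝ) (x : X) : EReal :=
  ⨅ φ : {φ : C(X, ℝ) // (∀ y, φ y ≤ 0) ∧ φ x = 0}, ((μ φ.1 : ℝ) : EReal)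
/-- For `φ ∈ C(X)`, the evaluation `π_φ : IX → ℝ`, `π_φ(ν) = ν(φ)`,
as a continuous map. -/
noncomputable def piEval {X : Type*} [TopologicalSpace X] (φ : C(X, ℝ)) :
    C(IspX X, ℝ) :=
  ⟨fun μ => μ.1 φ, (continuous_apply φ).comp continuous_subtype_val⟩


set_option linter.unusedSectionVars false

namespace Stmt10Aux

variable {X : Type*} [TopologicalSpace X]

theorem idem_mono {μ : C(X, ℝ) → ℝ} (hμ : IsIdempotentMeasure μ)
    {φ ψ : C(X, ℝ)} (h : φ ≤ ψ) : μ φ ≤ μ ψ := by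
  have := hμ.2.2 φ ψ
  rw [sup_eq_right.mpr h] at this
  rw [this]; exact le_max_left _ _

theorem idem_zero {μ : C(X, ℝ) → ℝ} (hμ : IsIdempotentMeasure μ) : μ 0 = 0 := by
  have h := hμ.2.1 1 0
  have h1 : ContinuousMap.const X (1:ℝ) + 0 = (1 : C(X,ℝ)) := by ext y; simp
  rw [h1, hμ.1] at h
  linarith

theorem idem_const {μ : C(X, ℝ) → ℝ} (hμ : IsIdempotentMeasure μ) (c : ℝ) :
    μ (ContinuousMap.const X c) = c := by
  have h := hμ.2.1 c 0
  rw [add_zero, idem_zero hμ] at h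
  rw [h, add_zero]

theorem idem_sup' {μ : C(X, ℝ) → ℝ} (hμ : IsIdempotentMeasure μ)
    {ι : Type*} (T : Finset ι) (hT : T.Nonempty) (h : ι → C(X, ℝ)) :
    μ (T.sup' hT h) = T.sup' hT fun i => μ (h i) := by
  induction hT using Finset.Nonempty.cons_induction with
  | singleton i => simp
  | cons i T hi hT ih =>
      rw [Finset.sup'_cons (H := hT), Finset.sup'_cons (H := hT), hμ.2.2, ih]


variable {X : Type*} [TopologicalSpace X] [CompactSpace X]

theorem idem_bdd {μ : C(X, ℝ) → ℝ} (hμ : IsIdempotentMeasure μ) (φ : C(X, ℝ)) :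
    μ φ ∈ Set.Icc (-‖φ‖) ‖φ‖ := by
  constructor
  · have : ContinuousMap.const X (-‖φ‖) ≤ φ := by
      intro y
      have := φ.norm_coe_le_norm y
      rw [Real.norm_eq_abs, abs_le] at this
      simpa using this.1
    simpa [idem_const hμ] using idem_mono hμ this
  · have : φ ≤ ContinuousMap.const X ‖φ‖ := by
      intro y
      have := φ.norm_coe_le_norm y
      rw [Real.norm_eq_abs, abs_le] at this
      simpa using this.2
    simpa [idem_const hμ] using idem_mono hμ this

theorem isClosed_setIdem :
    IsClosed {μ : C(X, ℝ) → ℝ | IsIdempotentMeasure μ} := by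
  have heq : {μ : C(X, ℝ) → ℝ | IsIdempotentMeasure μ} =
      {μ : C(X, ℝ) → ℝ | μ 1 = 1} ∩
      ((⋂ (l : ℝ), ⋂ (φ : C(X, ℝ)),
          {μ : C(X, ℝ) → ℝ | μ (ContinuousMap.const X l + φ) = l + μ φ}) ∩
        ⋂ (ψ : C(X, ℝ)), ⋂ (φ : C(X, ℝ)),
          {μ : C(X, ℝ) → ℝ | μ (ψ ⊔ φ) = max (μ ψ) (μ φ)}) := by
    ext μ
    simp [IsIdempotentMeasure, Set.mem_iInter, and_assoc]
  rw [heq]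
  refine (isClosed_eq (continuous_apply _) continuous_const).inter (IsClosed.inter ?_ ?_)
  · exact isClosed_iInter fun l => isClosed_iInter fun φ =>
      isClosed_eq (continuous_apply _) (continuous_const.add (continuous_apply _))
  · exact isClosed_iInter fun ψ => isClosed_iInter fun φ =>
      isClosed_eq (continuous_apply _) ((continuous_apply ψ).max (continuous_apply φ))

instance : CompactSpace (IspX X) := by
  apply isCompact_iff_compactSpace.mp
  refine IsCompact.of_isClosed_subset
    (isCompact_univ_pi fun φ => isCompact_Icc (a := -‖φ‖) (b := ‖φ‖)) isClosed_setIdem ?_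
  intro μ hμ
  exact fun φ _ => idem_bdd hμ φ



variable {X : Type*} [TopologicalSpace X]

theorem isOpen_Sminus {A : Set X} {t : EReal} (hA : IsClosed A) (ht : t ≤ 0) :
    IsOpen {f : Dspace X | ∀ a ∈ A, f.toFun a < t} :=
  TopologicalSpace.isOpen_generateFrom_of_mem (Or.inl ⟨A, t, hA, ht, rfl⟩)

theorem isOpen_Splus {U : Set X} {t : EReal} (hU : IsOpen U) (ht : t ≤ 0) :
    IsOpen {f : Dspace X | ∃ a ∈ U, t < f.toFun a} :=
  TopologicalSpace.isOpen_generateFrom_of_mem (Or.inr ⟨U, t, hU, ht, rfl⟩)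

/-- helper EReal lemmas -/
theorem ereal_lt_sub_of_add_lt {u : EReal} {c v : ℝ} (h : u + (c : EReal) < (v : EReal)) :
    u < ((v - c : ℝ) : EReal) := by
  induction u using EReal.rec with
  | bot => exact EReal.bot_lt_coe _
  | coe u =>
      rw [← EReal.coe_add] at h
      exact_mod_cast by linarith [EReal.coe_lt_coe_iff.mp h]
  | top => simp at h

theorem ereal_add_lt_of_lt_sub {u : EReal} {c v : ℝ} (h : u < ((v - c : ℝ) : EReal)) :
    u + (c : EReal) < (v : EReal) := by
  induction u using EReal.rec with
  | bot => simpa using EReal.bot_lt_coe v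
  | coe u =>
      rw [← EReal.coe_add]
      exact_mod_cast by linarith [EReal.coe_lt_coe_iff.mp h]
  | top => simp at h

theorem isOpen_T_gt (φ : C(X, ℝ)) (a : ℝ) :
    IsOpen {g : Dspace X | (a : EReal) < ⨆ y, g.toFun y + (φ y : EReal)} := by
  have heq : {g : Dspace X | (a : EReal) < ⨆ y, g.toFun y + (φ y : EReal)} =
      ⋃ (q : ℚ) (_ : (q : ℝ) < 0),
        {g : Dspace X | ∃ y ∈ {y : X | a - (q:ℝ) < φ y}, ((q : ℝ) : EReal) < g.toFun y} := by
    ext g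
    simp only [Set.mem_setOf_eq, Set.mem_iUnion]
    constructor
    · intro h
      rw [lt_iSup_iff] at h
      obtain ⟨y, hy⟩ := h
      have hgy_le : g.toFun y ≤ 0 := g.memD.2.1 y
      have hbot : g.toFun y ≠ ⊥ := by
        intro hb
        rw [hb] at hy
        simp at hy
      have htop : g.toFun y ≠ ⊤ := (hgy_le.trans_lt (by norm_num)).ne
      obtain ⟨u, hu⟩ : ∃ u : ℝ, g.toFun y = (u : EReal) := ⟨(g.toFun y).toReal,
        (EReal.coe_toReal htop hbot).symm⟩
      rw [hu] at hy hgy_le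
      rw [← EReal.coe_add, EReal.coe_lt_coe_iff] at hy
      have hu0 : u ≤ 0 := by exact_mod_cast hgy_le
      obtain ⟨q, hq1, hq2⟩ := exists_rat_btwn (show a - φ y < u by linarith)
      exact ⟨q, lt_of_lt_of_le hq2 hu0, y, by linarith, by rw [hu]; exact_mod_cast hq2⟩
    · rintro ⟨q, hq0, y, hy1, hy2⟩
      have h1 : ((q : ℝ) : EReal) + (φ y : EReal) < g.toFun y + (φ y : EReal) :=
        EReal.add_lt_add_right_coe hy2 _
      have h2 : (a : EReal) < ((q : ℝ) : EReal) + (φ y : EReal) := by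
        rw [← EReal.coe_add, EReal.coe_lt_coe_iff]
        linarith
      exact lt_of_lt_of_le (h2.trans h1) (le_iSup (fun y => g.toFun y + (φ y : EReal)) y)
  rw [heq]
  exact isOpen_iUnion fun q => isOpen_iUnion fun hq =>
    isOpen_Splus (isOpen_lt continuous_const φ.continuous) (by exact_mod_cast hq.le)
variable [CompactSpace X]

theorem isOpen_T_lt (φ : C(X, ℝ)) (hφ : ∀ y, φ y ≤ 0) (a : ℝ) :
    IsOpen {g : Dspace X | (⨆ y, g.toFun y + (φ y : EReal)) < (a : EReal)} := by
  rw [isOpen_iff_forall_mem_open]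
  intro g₀ hg₀
  simp only [Set.mem_setOf_eq] at hg₀
  -- pick a real r strictly between the sup and a
  obtain ⟨c, hc1, hc2⟩ := exists_between hg₀
  have hcbot : c ≠ ⊥ := (bot_le.trans_lt hc1).ne'
  have hctop : c ≠ ⊤ := (hc2.trans (EReal.coe_lt_top a)).ne
  set r : ℝ := c.toReal with hr
  have hcr : c = (r : EReal) := (EReal.coe_toReal hctop hcbot).symm
  rw [hcr] at hc1 hc2
  have hra : r < a := EReal.coe_lt_coe_iff.mp hc2
  set δ : ℝ := (a - r) / 2 with hδ
  have hδpos : 0 < δ := by simp [hδ]; linarith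
  set m : ℝ := -‖φ‖ with hm
  set n : ℕ := ⌈‖φ‖ / δ⌉₊ with hn
  set ci : ℕ → ℝ := fun i => m + i * δ with hci
  set Ai : ℕ → Set X := fun i => {y | ci i ≤ φ y ∧ φ y ≤ ci i + δ} with hAi
  classical
  set O : Set (Dspace X) := ⋂ i ∈ Finset.range (n + 1),
    (if r - ci i ≤ 0 then {g : Dspace X | ∀ y ∈ Ai i, g.toFun y < ((r - ci i : ℝ) : EReal)}
      else Set.univ) with hO
  have hAiclosed : ∀ i, IsClosed (Ai i) :=
    fun i => (isClosed_le continuous_const φ.continuous).inter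
      (isClosed_le φ.continuous continuous_const)
  have hOopen : IsOpen O := by
    refine isOpen_biInter_finset fun i _ => ?_
    split_ifs with h
    · exact isOpen_Sminus (hAiclosed i) (by exact_mod_cast h)
    · exact isOpen_univ
  -- every point of X lies in some Ai with index ≤ n
  have hcover : ∀ y : X, ∃ i ≤ n, y ∈ Ai i := by
    intro y
    have hlb : m ≤ φ y := by
      have := φ.norm_coe_le_norm y
      rw [Real.norm_eq_abs, abs_le] at this
      simpa [hm] using this.1
    set i : ℕ := ⌊(φ y - m) / δ⌋₊ with hi
    have hnonneg : 0 ≤ (φ y - m) / δ := div_nonneg (by linarith) hδpos.le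
    have h1 : (i : ℝ) ≤ (φ y - m) / δ := Nat.floor_le hnonneg
    have h2 : (φ y - m) / δ < i + 1 := Nat.lt_floor_add_one _
    refine ⟨i, ?_, ?_, ?_⟩
    · have hstep : (φ y - m) / δ ≤ ‖φ‖ / δ := by
        apply div_le_div_of_nonneg_right (c := δ) ?_ hδpos.le |>.trans_eq rfl
        have := hφ y
        rw [hm]; linarith
      have : ((i : ℝ)) ≤ (n : ℝ) := h1.trans (hstep.trans (Nat.le_ceil _))
      exact_mod_cast this
    · -- ci i ≤ φ y
      rw [hci]
      have := mul_le_mul_of_nonneg_right h1 hδpos.le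
      rw [div_mul_cancel₀] at this
      · simp only []
        linarith
      · exact hδpos.ne'
    · rw [hci]
      have := mul_lt_mul_of_pos_right h2 hδpos
      rw [div_mul_cancel₀] at this
      · simp only [Set.mem_setOf_eq] at *
        linarith
      · exact hδpos.ne'
  refine ⟨O, ?_, hOopen, ?_⟩
  · -- O is contained in the set
    intro g hg
    simp only [Set.mem_setOf_eq]
    have hbound : ∀ y : X, g.toFun y + (φ y : EReal) ≤ ((r + δ : ℝ) : EReal) := by
      intro y
      obtain ⟨i, hin, hy1, hy2⟩ := hcover y
      by_cases hcase : r - ci i ≤ 0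
      · have hgy : g.toFun y < ((r - ci i : ℝ) : EReal) := by
          have hmem := Set.mem_iInter₂.mp hg i (Finset.mem_range.mpr (Nat.lt_succ_of_le hin))
          rw [if_pos hcase] at hmem
          exact hmem y ⟨hy1, hy2⟩
        have h1 : g.toFun y + (φ y : EReal) < ((r - ci i : ℝ) : EReal) + (φ y : EReal) :=
          EReal.add_lt_add_right_coe hgy _
        have h2 : ((r - ci i : ℝ) : EReal) + (φ y : EReal) ≤ ((r + δ : ℝ) : EReal) := by
          rw [← EReal.coe_add, EReal.coe_le_coe_iff]
          linarith
        exact (h1.trans_le h2).le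
      · push_neg at hcase
        have h1 : g.toFun y + (φ y : EReal) ≤ 0 + (φ y : EReal) :=
          add_le_add_left (g.memD.2.1 y) _
        rw [zero_add] at h1
        refine h1.trans ?_
        rw [EReal.coe_le_coe_iff]
        linarith
    calc (⨆ y, g.toFun y + (φ y : EReal)) ≤ ((r + δ : ℝ) : EReal) := iSup_le hbound
      _ < (a : EReal) := by rw [EReal.coe_lt_coe_iff]; linarith
  · -- g₀ ∈ O
    rw [hO]
    simp only [Set.mem_iInter]
    intro i _
    split_ifs with hcase
    · intro y hy
      have hy1 : ci i ≤ φ y := hy.1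
      have hsup : g₀.toFun y + (φ y : EReal) < (r : EReal) :=
        lt_of_le_of_lt (le_iSup (fun y => g₀.toFun y + (φ y : EReal)) y) hc1
      have h1 : g₀.toFun y + ((ci i : ℝ) : EReal) ≤ g₀.toFun y + (φ y : EReal) := by
        apply add_le_add_right
        exact_mod_cast hy1
      exact ereal_lt_sub_of_add_lt (h1.trans_lt hsup)
    · trivial
noncomputable def Tfun (φ : C(X, ℝ)) (g : Dspace X) : EReal :=
  ⨆ y, g.toFun y + (φ y : EReal)

theorem Tfun_nonpos (φ : C(X, ℝ)) (hφ : ∀ y, φ y ≤ 0) (g : Dspace X) : Tfun φ g ≤ 0 :=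
  iSup_le fun y => add_nonpos (g.memD.2.1 y) (by exact_mod_cast hφ y)

theorem continuous_trunc (φ : C(X, ℝ)) (hφ : ∀ y, φ y ≤ 0) (K : ℝ) (hK : 0 ≤ K) :
    Continuous (fun g : Dspace X => (Tfun φ g ⊔ ((-K : ℝ) : EReal)).toReal) := by
  set F : Dspace X → ℝ := fun g => (Tfun φ g ⊔ ((-K : ℝ) : EReal)).toReal with hF
  have hVne_top : ∀ g, Tfun φ g ⊔ ((-K : ℝ) : EReal) ≠ ⊤ := by
    intro g
    have h0 : Tfun φ g ⊔ ((-K : ℝ) : EReal) ≤ 0 :=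
      sup_le (Tfun_nonpos φ hφ g) (by exact_mod_cast neg_nonpos.mpr hK)
    exact (h0.trans_lt (by norm_num)).ne
  have hVne_bot : ∀ g, Tfun φ g ⊔ ((-K : ℝ) : EReal) ≠ ⊥ := by
    intro g
    exact ((EReal.bot_lt_coe (-K)).trans_le le_sup_right).ne'
  have hcoe : ∀ g, ((F g : ℝ) : EReal) = Tfun φ g ⊔ ((-K : ℝ) : EReal) :=
    fun g => EReal.coe_toReal (hVne_top g) (hVne_bot g)
  rw [continuous_iff_lower_upperSemicontinuous]
  constructor
  · rw [lowerSemicontinuous_iff_isOpen_preimage]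
    intro a
    by_cases ha : a < -K
    · have : F ⁻¹' Set.Ioi a = Set.univ := by
        ext g
        simp only [Set.mem_preimage, Set.mem_Ioi, Set.mem_univ, iff_true]
        have : ((-K : ℝ) : EReal) ≤ (F g : EReal) := (hcoe g).symm ▸ le_sup_right
        have := EReal.coe_le_coe_iff.mp this
        linarith
      rw [this]; exact isOpen_univ
    · push_neg at ha
      have : F ⁻¹' Set.Ioi a = {g : Dspace X | (a : EReal) < Tfun φ g} := by
        ext g
        simp only [Set.mem_preimage, Set.mem_Ioi, Set.mem_setOf_eq]
        rw [← EReal.coe_lt_coe_iff, hcoe g, lt_sup_iff]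
        constructor
        · rintro (h | h)
          · exact h
          · exact absurd (EReal.coe_lt_coe_iff.mp h) (not_lt.mpr ha)
        · exact Or.inl
      rw [this]; exact isOpen_T_gt φ a
  · rw [upperSemicontinuous_iff_isOpen_preimage]
    intro a
    by_cases ha : -K < a
    · have : F ⁻¹' Set.Iio a = {g : Dspace X | Tfun φ g < (a : EReal)} := by
        ext g
        simp only [Set.mem_preimage, Set.mem_Iio, Set.mem_setOf_eq]
        rw [← EReal.coe_lt_coe_iff, hcoe g, sup_lt_iff]
        constructor
        · exact fun h => h.1
        · exact fun h => ⟨h, by exact_mod_cast ha⟩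
      rw [this]; exact isOpen_T_lt φ hφ a
    · push_neg at ha
      have : F ⁻¹' Set.Iio a = ∅ := by
        ext g
        simp only [Set.mem_preimage, Set.mem_Iio, Set.mem_empty_iff_false, iff_false, not_lt]
        have : ((-K : ℝ) : EReal) ≤ (F g : EReal) := (hcoe g).symm ▸ le_sup_right
        have := EReal.coe_le_coe_iff.mp this
        linarith
      rw [this]; exact isOpen_empty

omit [CompactSpace X] in
theorem sFun_le {ν : C(X, ℝ) → ℝ} {φ : C(X, ℝ)} (hφ1 : ∀ y, φ y ≤ 0) {y : X}
    (hφ2 : φ y = 0) : sFun ν y ≤ ((ν φ : ℝ) : EReal) :=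
  iInf_le (fun ψ : {ψ : C(X, ℝ) // (∀ z, ψ z ≤ 0) ∧ ψ y = 0} => ((ν ψ.1 : ℝ) : EReal))
    ⟨φ, hφ1, hφ2⟩

omit [CompactSpace X] in
theorem sFun_add_le {ν : C(X, ℝ) → ℝ} (hν : IsIdempotentMeasure ν) {φ : C(X, ℝ)}
    (hφ : ∀ z, φ z ≤ 0) (y : X) :
    sFun ν y + (φ y : EReal) ≤ ((ν φ : ℝ) : EReal) := by
  set ψ : C(X, ℝ) := (φ + ContinuousMap.const X (-(φ y))) ⊓ 0 with hψ
  have hψ1 : ∀ z, ψ z ≤ 0 := fun z => by simp [hψ]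
  have hψ2 : ψ y = 0 := by simp [hψ]
  have h1 : sFun ν y ≤ ((ν ψ : ℝ) : EReal) := sFun_le hψ1 hψ2
  have h2 : φ y + ν ψ ≤ ν φ := by
    have hle : ContinuousMap.const X (φ y) + ψ ≤ φ := by
      rw [ContinuousMap.le_def]
      intro z
      simp only [hψ, ContinuousMap.add_apply, ContinuousMap.const_apply,
        ContinuousMap.inf_apply, ContinuousMap.zero_apply]
      rcases le_total (φ z + -(φ y)) 0 with h | h
      · rw [min_eq_left h]; linarith
      · rw [min_eq_right h]; linarith
    calc φ y + ν ψ = ν (ContinuousMap.const X (φ y) + ψ) := (hν.2.1 _ _).symm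
      _ ≤ ν φ := idem_mono hν hle
  calc sFun ν y + (φ y : EReal) ≤ ((ν ψ : ℝ) : EReal) + (φ y : EReal) :=
        add_le_add_left h1 _
    _ = ((ν ψ + φ y : ℝ) : EReal) := by rw [EReal.coe_add]
    _ ≤ ((ν φ : ℝ) : EReal) := by
        rw [EReal.coe_le_coe_iff]; linarith

omit [CompactSpace X] in
theorem sFun_nonpos {ν : C(X, ℝ) → ℝ} (hν : IsIdempotentMeasure ν) (y : X) :
    sFun ν y ≤ 0 := by
  have h := sFun_le (ν := ν) (φ := 0) (fun z => le_refl 0) (y := y) rfl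
  rw [idem_zero hν] at h
  exact h.trans_eq (by norm_num)


theorem dir1 (s : C(IspX X, Dspace X))
    (hs : ∀ (μ : IspX X) (z : X), (s μ).toFun z = sFun μ.1 z)
    (N : C(IspX X, ℝ) → ℝ) (hN : IsIdempotentMeasure N) (x : X) :
    (⨆ f : Dspace X, f.toFun x + sFun (fun Ψ : C(Dspace X, ℝ) => N (Ψ.comp s)) f)
      ≤ sFun (fun φ : C(X, ℝ) => N (piEval φ)) x := by
  refine iSup_le fun f => ?_
  rw [show sFun (fun φ : C(X, ℝ) => N (piEval φ)) x =
      ⨅ φc : {φ : C(X, ℝ) // (∀ y, φ y ≤ 0) ∧ φ x = 0}, ((N (piEval φc.1) : ℝ) : EReal)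
      from rfl]
  refine le_iInf fun φc => ?_
  obtain ⟨φ, hφ1, hφ2⟩ := φc
  by_cases hbot : f.toFun x = ⊥
  · rw [hbot, EReal.bot_add]; exact bot_le
  · have htop : f.toFun x ≠ ⊤ := ((f.memD.2.1 x).trans_lt (by norm_num)).ne
    set r : ℝ := (f.toFun x).toReal with hrdef
    have hfr : f.toFun x = (r : EReal) := (EReal.coe_toReal htop hbot).symm
    have hr0 : r ≤ 0 := by
      have := f.memD.2.1 x
      rw [hfr] at this
      exact_mod_cast this
    set K : ℝ := ‖φ‖ - r with hKdef
    have hK0 : 0 ≤ K := by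
      have := norm_nonneg φ
      rw [hKdef]; linarith
    set Ψc : C(Dspace X, ℝ) :=
      ⟨fun g => min 0 ((Tfun φ g ⊔ ((-K : ℝ) : EReal)).toReal - r),
        continuous_const.min ((continuous_trunc φ hφ1 K hK0).sub continuous_const)⟩ with hΨc
    have hΨapp : ∀ g, Ψc g = min 0 ((Tfun φ g ⊔ ((-K : ℝ) : EReal)).toReal - r) :=
      fun g => rfl
    have hΨ1 : ∀ g, Ψc g ≤ 0 := fun g => by rw [hΨapp]; exact min_le_left _ _
    have hsupne_top : ∀ g : Dspace X, Tfun φ g ⊔ ((-K : ℝ) : EReal) ≠ ⊤ := by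
      intro g
      have h0 : Tfun φ g ⊔ ((-K : ℝ) : EReal) ≤ 0 :=
        sup_le (Tfun_nonpos φ hφ1 g) (by exact_mod_cast neg_nonpos.mpr hK0)
      exact (h0.trans_lt (by norm_num)).ne
    have hsupne_bot : ∀ g : Dspace X, Tfun φ g ⊔ ((-K : ℝ) : EReal) ≠ ⊥ :=
      fun g => ((EReal.bot_lt_coe (-K)).trans_le le_sup_right).ne'
    have hΨ2 : Ψc f = 0 := by
      have h1 : (r : EReal) ≤ Tfun φ f := by
        calc (r : EReal) = f.toFun x + ((φ x : ℝ) : EReal) := by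
              rw [hfr, hφ2]; simp
          _ ≤ Tfun φ f := le_iSup (fun y => f.toFun y + ((φ y : ℝ) : EReal)) x
      have h2 : (r : EReal) ≤ Tfun φ f ⊔ ((-K : ℝ) : EReal) := h1.trans le_sup_left
      have h3 : r ≤ (Tfun φ f ⊔ ((-K : ℝ) : EReal)).toReal := by
        have := EReal.toReal_le_toReal h2 (EReal.coe_ne_bot r) (hsupne_top f)
        rwa [EReal.toReal_coe] at this
      rw [hΨapp, min_eq_left]
      linarith
    have hΨ3 : ∀ ν : IspX X, Ψc (s ν) ≤ ν.1 φ - r := by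
      intro ν
      have hV : Tfun φ (s ν) ⊔ ((-K : ℝ) : EReal) ≤ ((ν.1 φ : ℝ) : EReal) := by
        refine sup_le (iSup_le fun y => ?_) ?_
        · rw [hs ν y]
          exact sFun_add_le ν.2 hφ1 y
        · have := (idem_bdd ν.2 φ).1
          rw [EReal.coe_le_coe_iff, hKdef]
          linarith
      have h4 : (Tfun φ (s ν) ⊔ ((-K : ℝ) : EReal)).toReal ≤ ν.1 φ := by
        have := EReal.toReal_le_toReal hV (hsupne_bot (s ν)) (EReal.coe_ne_top _)
        rwa [EReal.toReal_coe] at this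
      rw [hΨapp]
      calc min 0 ((Tfun φ (s ν) ⊔ ((-K : ℝ) : EReal)).toReal - r)
          ≤ (Tfun φ (s ν) ⊔ ((-K : ℝ) : EReal)).toReal - r := min_le_right _ _
        _ ≤ ν.1 φ - r := by linarith
    have hmono : N (Ψc.comp s) ≤ -r + N (piEval φ) := by
      have hle : Ψc.comp s ≤ ContinuousMap.const (IspX X) (-r) + piEval φ := by
        rw [ContinuousMap.le_def]
        intro ν
        have h5 := hΨ3 ν
        simp only [ContinuousMap.comp_apply, ContinuousMap.add_apply,
          ContinuousMap.const_apply, piEval, ContinuousMap.coe_mk]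
        linarith
      exact (idem_mono hN hle).trans_eq (hN.2.1 (-r) (piEval φ))
    have hG : sFun (fun Ψ : C(Dspace X, ℝ) => N (Ψ.comp s)) f ≤
        ((N (Ψc.comp s) : ℝ) : EReal) := sFun_le hΨ1 hΨ2
    calc f.toFun x + sFun (fun Ψ : C(Dspace X, ℝ) => N (Ψ.comp s)) f
        ≤ (r : EReal) + ((N (Ψc.comp s) : ℝ) : EReal) := by
          rw [hfr]; exact add_le_add_right hG _
      _ = ((r + N (Ψc.comp s) : ℝ) : EReal) := by rw [EReal.coe_add]
      _ ≤ ((N (piEval φ) : ℝ) : EReal) := by rw [EReal.coe_le_coe_iff]; linarith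

omit [CompactSpace X] in
theorem idem_push (N : C(IspX X, ℝ) → ℝ) (hN : IsIdempotentMeasure N) :
    IsIdempotentMeasure (fun φ : C(X, ℝ) => N (piEval φ)) := by
  refine ⟨?_, ?_, ?_⟩
  · have : piEval (X := X) 1 = 1 := by
      ext ν
      exact ν.2.1
    show N (piEval 1) = 1
    rw [this]; exact hN.1
  · intro l φ
    have : piEval (ContinuousMap.const X l + φ) = ContinuousMap.const (IspX X) l + piEval φ := by
      ext ν
      exact ν.2.2.1 l φ
    show N (piEval (ContinuousMap.const X l + φ)) = l + N (piEval φ)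
    rw [this]; exact hN.2.1 l (piEval φ)
  · intro ψ φ
    have : piEval (ψ ⊔ φ) = piEval ψ ⊔ piEval φ := by
      ext ν
      exact ν.2.2.2 ψ φ
    show N (piEval (ψ ⊔ φ)) = max (N (piEval ψ)) (N (piEval φ))
    rw [this]; exact hN.2.2 _ _

omit [CompactSpace X] in
theorem ereal_le_of_forall {a b : EReal} (ha : a ≤ 0)
    (h : ∀ t : ℝ, b < (t : EReal) → a ≤ (t : EReal)) : a ≤ b := by
  by_contra hab
  push_neg at hab
  obtain ⟨c, hc1, hc2⟩ := exists_between hab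
  have hcbot : c ≠ ⊥ := (bot_le.trans_lt hc1).ne'
  have hctop : c ≠ ⊤ := (hc2.trans_le (ha.trans (by norm_num))).ne
  have hcr : c = ((c.toReal : ℝ) : EReal) := (EReal.coe_toReal hctop hcbot).symm
  rw [hcr] at hc1 hc2
  exact absurd (h c.toReal hc1) (not_le.mpr hc2)

omit [CompactSpace X] in
theorem ereal_le_coe_of_forall {a : EReal} {t : ℝ}
    (h : ∀ ε : ℝ, 0 < ε → a ≤ ((t + ε : ℝ) : EReal)) : a ≤ (t : EReal) := by
  by_contra hab
  push_neg at hab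
  obtain ⟨c, hc1, hc2⟩ := exists_between hab
  have hcbot : c ≠ ⊥ := (bot_le.trans_lt hc1).ne'
  have hctop : c ≠ ⊤ := ((hc2.trans_le (h 1 one_pos)).trans (EReal.coe_lt_top _)).ne
  have hcr : c = ((c.toReal : ℝ) : EReal) := (EReal.coe_toReal hctop hcbot).symm
  rw [hcr] at hc1 hc2
  have htu : t < c.toReal := EReal.coe_lt_coe_iff.mp hc1
  have := h (c.toReal - t) (by linarith)
  rw [show t + (c.toReal - t) = c.toReal by ring] at this
  exact absurd this (not_le.mpr hc2)

omit [CompactSpace X] in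
theorem ereal_lt_coe_sub {u : EReal} {r t : ℝ} (h : (r : EReal) + u < (t : EReal)) :
    u < ((t - r : ℝ) : EReal) := by
  induction u using EReal.rec with
  | bot => exact EReal.bot_lt_coe _
  | coe u =>
      rw [← EReal.coe_add] at h
      exact_mod_cast by linarith [EReal.coe_lt_coe_iff.mp h]
  | top => simp at h

omit [CompactSpace X] in
theorem dirac_mem (x : X) : IsIdempotentMeasure (fun φ : C(X, ℝ) => φ x) := by
  refine ⟨by simp, fun l φ => by simp, fun ψ φ => by simp⟩

theorem dir2 (s : C(IspX X, Dspace X))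
    (hs : ∀ (μ : IspX X) (z : X), (s μ).toFun z = sFun μ.1 z)
    (N : C(IspX X, ℝ) → ℝ) (hN : IsIdempotentMeasure N) (x : X) :
    sFun (fun φ : C(X, ℝ) => N (piEval φ)) x ≤
      ⨆ f : Dspace X, f.toFun x + sFun (fun Ψ : C(Dspace X, ℝ) => N (Ψ.comp s)) f := by
  refine ereal_le_of_forall (sFun_nonpos (idem_push N hN) x) fun t ht => ?_
  refine ereal_le_coe_of_forall fun ε2 hε2 => ?_
  set ε : ℝ := ε2 / 2 with hεdef
  have hε : 0 < ε := by rw [hεdef]; linarith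
  have key : ∀ ν : IspX X, ∃ (φν : C(X, ℝ)) (hν : C(IspX X, ℝ)) (W : Set (IspX X)),
      (∀ y, φν y ≤ 0) ∧ φν x = 0 ∧ N hν ≤ t + 2 * ε ∧ IsOpen W ∧ ν ∈ W ∧
      ∀ ν' : IspX X, ν' ∈ W → ν'.1 φν ≤ hν ν' := by
    intro ν
    by_cases hb : sFun ν.1 x = ⊥
    · have hlt : sFun ν.1 x < (t : EReal) := by rw [hb]; exact EReal.bot_lt_coe t
      obtain ⟨φc, hφc⟩ := iInf_lt_iff.mp hlt
      have hφcr : ν.1 φc.1 < t := by exact_mod_cast hφc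
      refine ⟨φc.1, ContinuousMap.const _ t, {ν' : IspX X | ν'.1 φc.1 < t},
        φc.2.1, φc.2.2, ?_, ?_, hφcr, ?_⟩
      · rw [idem_const hN]; linarith
      · exact isOpen_lt (piEval φc.1).continuous continuous_const
      · intro ν' hν'
        simp only [ContinuousMap.const_apply]
        exact le_of_lt hν'
    · have hne_top : sFun ν.1 x ≠ ⊤ := ((sFun_nonpos ν.2 x).trans_lt (by norm_num)).ne
      set r : ℝ := (sFun ν.1 x).toReal with hrdef
      have hfr : sFun ν.1 x = (r : EReal) := (EReal.coe_toReal hne_top hb).symm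
      have h1 : (s ν).toFun x + sFun (fun Ψ : C(Dspace X, ℝ) => N (Ψ.comp s)) (s ν)
          < (t : EReal) :=
        lt_of_le_of_lt
          (le_iSup (fun f : Dspace X =>
            f.toFun x + sFun (fun Ψ : C(Dspace X, ℝ) => N (Ψ.comp s)) f) (s ν)) ht
      rw [hs ν x, hfr] at h1
      have h2 : sFun (fun Ψ : C(Dspace X, ℝ) => N (Ψ.comp s)) (s ν)
          < ((t - r : ℝ) : EReal) := ereal_lt_coe_sub h1
      obtain ⟨Ψc, hΨc⟩ := iInf_lt_iff.mp h2
      have hΨcr : N (Ψc.1.comp s) < t - r := by exact_mod_cast hΨc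
      have h3 : sFun ν.1 x < ((r + ε : ℝ) : EReal) := by
        rw [hfr, EReal.coe_lt_coe_iff]; linarith
      obtain ⟨φc, hφc⟩ := iInf_lt_iff.mp h3
      have hφcr : ν.1 φc.1 < r + ε := by exact_mod_cast hφc
      refine ⟨φc.1, ContinuousMap.const _ (r + 2 * ε) + Ψc.1.comp s,
        {ν' : IspX X | ν'.1 φc.1 < r + ε} ∩ {ν' : IspX X | -ε < Ψc.1 (s ν')},
        φc.2.1, φc.2.2, ?_, ?_, ?_, ?_⟩
      · rw [hN.2.1]; linarith
      · exact (isOpen_lt (piEval φc.1).continuous continuous_const).inter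
          (isOpen_lt continuous_const (Ψc.1.continuous.comp s.continuous))
      · refine ⟨hφcr, ?_⟩
        show -ε < Ψc.1 (s ν)
        rw [Ψc.2.2]
        linarith
      · rintro ν' ⟨ha1, ha2⟩
        simp only [Set.mem_setOf_eq] at ha1 ha2
        simp only [ContinuousMap.add_apply, ContinuousMap.const_apply,
          ContinuousMap.comp_apply]
        linarith
  choose φf hf Wf hp1 hp2 hp3 hp4 hp5 hp6 using key
  obtain ⟨T, hT⟩ := isCompact_univ.elim_finite_subcover Wf hp4
    (fun ν _ => Set.mem_iUnion.mpr ⟨ν, hp5 ν⟩)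
  have hTne : T.Nonempty := by
    have := hT (Set.mem_univ (⟨fun φ => φ x, dirac_mem x⟩ : IspX X))
    rw [Set.mem_iUnion₂] at this
    obtain ⟨i, hiT, _⟩ := this
    exact ⟨i, hiT⟩
  set φstar : C(X, ℝ) := T.inf' hTne φf with hφstar
  have hφs1 : ∀ y, φstar y ≤ 0 := by
    intro y
    obtain ⟨i, hiT⟩ := id hTne
    calc φstar y ≤ φf i y := by
          have : φstar ≤ φf i := Finset.inf'_le φf hiT
          exact this y
      _ ≤ 0 := hp1 i y
  have hφs2 : φstar x = 0 := by
    rw [hφstar, ContinuousMap.inf'_apply]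
    refine le_antisymm ?_ ?_
    · obtain ⟨i, hiT⟩ := id hTne
      calc T.inf' hTne (fun i => φf i x) ≤ φf i x := Finset.inf'_le _ hiT
        _ = 0 := hp2 i
    · exact Finset.le_inf' hTne _ fun i hiT => (hp2 i).ge
  have hpoint : piEval φstar ≤ T.sup' hTne hf := by
    rw [ContinuousMap.le_def]
    intro ν'
    have := hT (Set.mem_univ ν')
    rw [Set.mem_iUnion₂] at this
    obtain ⟨i, hiT, hWi⟩ := this
    have hstep1 : ν'.1 φstar ≤ ν'.1 (φf i) := idem_mono ν'.2 (Finset.inf'_le φf hiT)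
    have hstep2 : ν'.1 (φf i) ≤ hf i ν' := hp6 i ν' hWi
    have hstep3 : hf i ν' ≤ (T.sup' hTne hf) ν' := by
      rw [ContinuousMap.sup'_apply]
      exact Finset.le_sup' (f := fun i => hf i ν') hiT
    calc (piEval φstar) ν' = ν'.1 φstar := rfl
      _ ≤ _ := hstep1.trans (hstep2.trans hstep3)
  have hfinal : N (piEval φstar) ≤ t + 2 * ε := by
    calc N (piEval φstar) ≤ N (T.sup' hTne hf) := idem_mono hN hpoint
      _ = T.sup' hTne fun i => N (hf i) := idem_sup' hN T hTne hf
      _ ≤ t + 2 * ε := Finset.sup'_le hTne _ fun i _ => hp3 i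
  calc sFun (fun φ : C(X, ℝ) => N (piEval φ)) x ≤ ((N (piEval φstar) : ℝ) : EReal) :=
        sFun_le hφs1 hφs2
    _ ≤ ((t + ε2 : ℝ) : EReal) := by
        rw [EReal.coe_le_coe_iff]
        rw [hεdef] at hfinal
        linarith

end Stmt10Aux

/-- For a compactum `X`, `sX ∘ μX = κX ∘ s_{DX} ∘ I(sX)` as maps
`I(IX) → DX`: for every idempotent measure `N` on `IX` and `x ∈ X`,
`inf{N(π_φ) : φ ∈ C(X,(-∞,0]), φ(x) = 0}
  = max{f(x) + s_{DX}(I(sX)(N))(f) : f ∈ DX}`.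
Here `s` is given by its defining formula `sX(μ)(x) = inf{μ(φ) : φ ≤ 0, φ(x) = 0}`
(a continuous map `IX → DX`), `I(sX)(N)(Ψ) = N(Ψ ∘ sX)`, and `μX(N)(φ) = N(π_φ)`. -/
theorem stmt10 {X : Type*} [TopologicalSpace X] [CompactSpace X] [T2Space X]
    (s : C(IspX X, Dspace X))
    (hs : ∀ (μ : IspX X) (x : X), (s μ).toFun x = sFun μ.1 x)
    (N : C(IspX X, ℝ) → ℝ) (hN : IsIdempotentMeasure N) (x : X) :
    sFun (fun φ : C(X, ℝ) => N (piEval φ)) x =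
      ⨆ f : Dspace X,
        f.toFun x + sFun (fun Ψ : C(Dspace X, ℝ) => N (Ψ.comp s)) f :=
  le_antisymm (Stmt10Aux.dir2 s hs N hN x) (Stmt10Aux.dir1 s hs N hN x)
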